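/- There exists k₀ such that for all integers k ≥ k₀, there is a code C ⊆ {0,1}^k of size at least 2^{k/2} that can correct ⌈4·log₂(k)⌉ deletion errors; i.e., no string in {0,1}^{k−⌈4 log₂ k⌉} can be obtained from two distinct codewords of C each by deleting ⌈4 log₂ k⌉ symbols. -/

import Mathlib

/-- there is a `k₀` such that for all `k ≥ k₀` there is a binary code of
length `k` and size at least `2^{k/2}` correcting `⌈4 log₂ k⌉` deletions: no string of
length `k - ⌈4 log₂ k⌉` is a common subsequence of two distinct codewords. -/

private lemma foldl_erase_shift (l : List ℕ) (a : Bool) :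
    ∀ x : List Bool, (l.map (· + 1)).foldl (fun s i => s.eraseIdx i) (a :: x)
      = a :: l.foldl (fun s i => s.eraseIdx i) x := by
  induction l with
  | nil => intro x; simp
  | cons j t ih => intro x; simp only [List.map_cons, List.foldl_cons, List.eraseIdx_cons_succ]
                   exact ih _

private lemma foldl_insert_shift (l : List (ℕ × Bool)) (a : Bool) :
    ∀ z : List Bool,
      (l.map (fun p => (p.1 + 1, p.2))).foldl (fun s p => s.insertIdx p.1 p.2) (a :: z)
      = a :: l.foldl (fun s p => s.insertIdx p.1 p.2) z := by
  induction l with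
  | nil => intro z; simp
  | cons j t ih => intro z; simp only [List.map_cons, List.foldl_cons, List.insertIdx_succ_cons]
                   exact ih _

private lemma exists_del {z x : List Bool} (h : z.Sublist x) :
    ∃ l : List ℕ, l.length = x.length - z.length ∧ (∀ i ∈ l, i < x.length) ∧
      l.foldl (fun s i => s.eraseIdx i) x = z := by
  induction h with
  | slnil => exact ⟨[], by simp, by simp, rfl⟩
  | @cons z x a h ih =>
      obtain ⟨l, hl, hb, hf⟩ := ih
      refine ⟨0 :: l, ?_, ?_, ?_⟩
      · have := h.length_le; simp [hl]; omega
      · intro i hi; rcases List.mem_cons.1 hi with rfl | hi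
        · simp
        · exact Nat.lt_succ_of_lt (hb i hi)
      · simpa using hf
  | @cons_cons z x a h ih =>
      obtain ⟨l, hl, hb, hf⟩ := ih
      refine ⟨l.map (· + 1), ?_, ?_, ?_⟩
      · simp [hl]
      · intro i hi; obtain ⟨j, hj, rfl⟩ := List.mem_map.1 hi
        simpa using hb j hj
      · rw [foldl_erase_shift, hf]

private lemma exists_ins {z y : List Bool} (h : z.Sublist y) :
    ∃ l : List (ℕ × Bool), l.length = y.length - z.length ∧ (∀ p ∈ l, p.1 < y.length + 1) ∧
      l.foldl (fun s p => s.insertIdx p.1 p.2) z = y := by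
  induction h with
  | slnil => exact ⟨[], by simp, by simp, rfl⟩
  | @cons z x a h ih =>
      obtain ⟨l, hl, hb, hf⟩ := ih
      refine ⟨l ++ [(0, a)], ?_, ?_, ?_⟩
      · have := h.length_le; simp [hl]; omega
      · intro p hp; rcases List.mem_append.1 hp with hp | hp
        · exact Nat.lt_succ_of_lt (hb p hp)
        · rw [List.mem_singleton] at hp; subst hp; simp
      · rw [List.foldl_append, hf]; simp
  | @cons_cons z x a h ih =>
      obtain ⟨l, hl, hb, hf⟩ := ih
      refine ⟨l.map (fun p => (p.1 + 1, p.2)), ?_, ?_, ?_⟩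
      · simp [hl]
      · intro p hp; obtain ⟨q, hq, rfl⟩ := List.mem_map.1 hp
        simpa using hb q hq
      · rw [foldl_insert_shift, hf]


private lemma greedy_indep {α : Type} [DecidableEq α] (r : α → α → Prop) [DecidableRel r]
    (hsymm : ∀ a b, r a b → r b a) (B : ℕ) :
    ∀ S : Finset α, (∀ x ∈ S, r x x) →
      (∀ x ∈ S, (S.filter (fun y => r x y)).card ≤ B) →
      ∃ T ⊆ S, (∀ x ∈ T, ∀ y ∈ T, x ≠ y → ¬ r x y) ∧ S.card ≤ B * T.card := by
  intro S
  induction S using Finset.strongInduction with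
  | _ S ih =>
    intro hrefl hdeg
    rcases S.eq_empty_or_nonempty with rfl | ⟨x, hx⟩
    · exact ⟨∅, Finset.Subset.refl _, by simp, by simp⟩
    · set N := S.filter (fun y => r x y) with hN
      have hxN : x ∈ N := Finset.mem_filter.2 ⟨hx, hrefl x hx⟩
      have hNS : N ⊆ S := Finset.filter_subset _ _
      have hss : S \ N ⊂ S := by
        apply Finset.sdiff_ssubset hNS ⟨x, hxN⟩
      obtain ⟨T, hTsub, hTind, hTcard⟩ := ih (S \ N) hss
        (fun y hy => hrefl y (Finset.mem_sdiff.1 hy).1)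
        (fun y hy => le_trans (Finset.card_le_card
          (Finset.filter_subset_filter _ (Finset.sdiff_subset))) (hdeg y (Finset.mem_sdiff.1 hy).1))
      have hxT : x ∉ T := fun h => (Finset.mem_sdiff.1 (hTsub h)).2 hxN
      refine ⟨insert x T, ?_, ?_, ?_⟩
      · intro a ha; rcases Finset.mem_insert.1 ha with rfl | ha
        · exact hx
        · exact Finset.sdiff_subset (hTsub ha)
      · intro a ha b hb hab hr
        have hmem : ∀ c, c ∈ T → ¬ r x c := by
          intro c hc hrc
          exact (Finset.mem_sdiff.1 (hTsub hc)).2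
            (Finset.mem_filter.2 ⟨(Finset.mem_sdiff.1 (hTsub hc)).1, hrc⟩)
        rcases Finset.mem_insert.1 ha with ha' | ha'
        · rcases Finset.mem_insert.1 hb with hb' | hb'
          · exact hab (ha'.trans hb'.symm)
          · exact hmem b hb' (ha' ▸ hr)
        · rcases Finset.mem_insert.1 hb with hb' | hb'
          · exact hmem a ha' (hb' ▸ hsymm _ _ hr)
          · exact hTind a ha' b hb' hab hr
      · have h1 : (S \ N).card + N.card = S.card :=
          Finset.card_sdiff_add_card_eq_card hNS
        have h2 : N.card ≤ B := hdeg x hx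
        rw [Finset.card_insert_of_notMem hxT]
        have := Finset.card_le_card hNS
        calc S.card = (S \ N).card + N.card := h1.symm
          _ ≤ B * T.card + B := by omega
          _ = B * (T.card + 1) := by ring

private lemma twelve_sq_le : ∀ L : ℕ, 12 ≤ L → 12 * (L + 1)^2 + 2 ≤ 2 ^ (L - 1) := by
  intro L hL
  induction L, hL using Nat.le_induction with
  | base => norm_num
  | succ n hn ih =>
    have h2 : 2 ^ (n - 1) * 2 = 2 ^ (n + 1 - 1) := by
      rw [← pow_succ]; congr 1; omega
    nlinarith [ih]

theorem exists_deletion_code :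
    ∃ k₀ : ℕ, ∀ k : ℕ, k₀ ≤ k →
      ∃ C : Finset (List Bool),
        (∀ x ∈ C, x.length = k) ∧
        (2 : ℝ) ^ ((k : ℝ) / 2) ≤ (C.card : ℝ) ∧
        ∀ x ∈ C, ∀ y ∈ C, x ≠ y →
          ∀ z : List Bool,
            ¬(z.length = k - ⌈4 * Real.logb 2 (k : ℝ)⌉₊ ∧ z.Sublist x ∧ z.Sublist y) := by
  classical
  refine ⟨4096, fun k hk => ?_⟩
  set d : ℕ := ⌈4 * Real.logb 2 (k : ℝ)⌉₊ with hd_def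
  set L : ℕ := Nat.log 2 k with hL_def
  have hk0 : k ≠ 0 := by omega
  have hL12 : 12 ≤ L := by
    rw [hL_def, Nat.le_log_iff_pow_le (by norm_num) hk0]
    norm_num; omega
  have h2L : 2 ^ L ≤ k := Nat.pow_log_le_self 2 hk0
  have hkU : k < 2 ^ (L + 1) := Nat.lt_pow_succ_log_self (by norm_num) k
  -- d ≤ 4 * (L + 1)
  have hlogb : Real.logb 2 (k : ℝ) ≤ (L : ℝ) + 1 := by
    have h1 : (k : ℝ) ≤ (2 : ℝ) ^ ((L : ℕ) + 1) := by
      exact_mod_cast hkU.le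
    calc Real.logb 2 (k : ℝ) ≤ Real.logb 2 ((2 : ℝ) ^ (L + 1)) := by
          apply Real.logb_le_logb_of_le (by norm_num) (by positivity) h1
      _ = (L : ℝ) + 1 := by
          rw [Real.logb_pow]
          simp [Real.logb_self_eq_one]
  have hd4 : d ≤ 4 * (L + 1) := by
    rw [hd_def]
    apply Nat.ceil_le.2
    push_cast
    linarith
  have hsq : 12 * (L + 1) ^ 2 + 2 ≤ 2 ^ (L - 1) := twelve_sq_le L hL12
  have h2Lhalf : 2 ^ (L - 1) * 2 = 2 ^ L := by
    rw [← pow_succ]; congr 1; omega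
  have hdk : d ≤ k := by nlinarith [hsq, h2L, h2Lhalf, hd4]
  -- the universe of all length-k strings
  set S : Finset (List Bool) :=
    (Finset.univ : Finset (List.Vector Bool k)).image List.Vector.toList with hS_def
  have hmemS : ∀ x : List Bool, x ∈ S ↔ x.length = k := by
    intro x
    constructor
    · intro hx
      obtain ⟨v, _, rfl⟩ := Finset.mem_image.1 hx
      exact v.toList_length
    · intro hx
      exact Finset.mem_image.2 ⟨⟨x, hx⟩, Finset.mem_univ _, rfl⟩
  have hScard : S.card = 2 ^ k := by
    rw [hS_def, Finset.card_image_of_injective _ List.Vector.toList_injective,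
      Finset.card_univ, card_vector, Fintype.card_bool]
  -- the conflict relation
  set r : List Bool → List Bool → Prop :=
    fun a b => ∃ z : List Bool, z.length = k - d ∧ z.Sublist a ∧ z.Sublist b with hr_def
  have hsymm : ∀ a b, r a b → r b a := by
    rintro a b ⟨z, h1, h2, h3⟩; exact ⟨z, h1, h3, h2⟩
  have hrefl : ∀ x ∈ S, r x x := by
    intro x hx
    refine ⟨x.take (k - d), ?_, List.take_sublist _ _, List.take_sublist _ _⟩
    rw [List.length_take, (hmemS x).1 hx]
    omega
  -- degree bound
  set B : ℕ := k ^ d * (2 * (k + 1)) ^ d with hB_def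
  have hdeg : ∀ x ∈ S, (S.filter (fun y => r x y)).card ≤ B := by
    intro x hx
    have hxlen : x.length = k := (hmemS x).1 hx
    set F : List.Vector (Fin k) d × List.Vector (Fin (k + 1) × Bool) d → List Bool :=
      fun vw => ((vw.2.toList.map (fun p => ((p.1 : ℕ), p.2))).foldl
        (fun s p => s.insertIdx p.1 p.2)
        ((vw.1.toList.map Fin.val).foldl (fun s i => s.eraseIdx i) x)) with hF_def
    have hsub : S.filter (fun y => r x y) ⊆ Finset.univ.image F := by
      intro y hy
      obtain ⟨hyS, z, hz1, hzx, hzy⟩ := Finset.mem_filter.1 hy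
      have hylen : y.length = k := (hmemS y).1 hyS
      obtain ⟨l₁, hl₁, hb₁, hf₁⟩ := exists_del hzx
      obtain ⟨l₂, hl₂, hb₂, hf₂⟩ := exists_ins hzy
      rw [hxlen, hz1] at hl₁
      rw [hxlen] at hb₁
      rw [hylen, hz1] at hl₂
      rw [hylen] at hb₂
      have hl₁d : l₁.length = d := by rw [hl₁]; omega
      have hl₂d : l₂.length = d := by rw [hl₂]; omega
      have hb₂' : ∀ p ∈ l₂, p.1 < k + 1 := by
        intro p hp; have := hb₂ p hp; omega
      refine Finset.mem_image.2
        ⟨(⟨l₁.pmap (fun i h => (⟨i, h⟩ : Fin k)) hb₁, by simp [hl₁d]⟩,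
          ⟨l₂.pmap (fun p h => ((⟨p.1, h⟩ : Fin (k + 1)), p.2)) hb₂', by simp [hl₂d]⟩),
          Finset.mem_univ _, ?_⟩
      rw [hF_def]
      simp only [List.Vector.toList, List.map_pmap, List.pmap_eq_map, Prod.mk.eta,
        List.map_id, List.map_id']
      rw [hf₁, hf₂]
    calc (S.filter (fun y => r x y)).card ≤ (Finset.univ.image F).card :=
          Finset.card_le_card hsub
      _ ≤ Fintype.card (List.Vector (Fin k) d × List.Vector (Fin (k + 1) × Bool) d) := by
          exact Finset.card_image_le.trans_eq Finset.card_univ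
      _ = B := by
          rw [Fintype.card_prod, card_vector, card_vector, Fintype.card_fin,
            Fintype.card_prod, Fintype.card_fin, Fintype.card_bool, hB_def]
          ring
  obtain ⟨C, hCsub, hCind, hCcard⟩ := greedy_indep r hsymm B S hrefl hdeg
  -- numeric bound on B
  set m : ℕ := 12 * (L + 1) ^ 2 with hm_def
  have hBle : B ≤ 2 ^ m := by
    have e1 : k ^ d ≤ (2 ^ (L + 1)) ^ d := Nat.pow_le_pow_left hkU.le d
    have e2 : (2 * (k + 1)) ^ d ≤ (2 ^ (L + 2)) ^ d := by
      apply Nat.pow_le_pow_left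
      have : k + 1 ≤ 2 ^ (L + 1) := hkU
      calc 2 * (k + 1) ≤ 2 * 2 ^ (L + 1) := by omega
        _ = 2 ^ (L + 2) := by ring
    calc B ≤ (2 ^ (L + 1)) ^ d * (2 ^ (L + 2)) ^ d := Nat.mul_le_mul e1 e2
      _ = 2 ^ ((L + 1) * d + (L + 2) * d) := by rw [← pow_mul, ← pow_mul, ← pow_add]
      _ ≤ 2 ^ m := by
          apply Nat.pow_le_pow_right (by norm_num)
          rw [hm_def]; nlinarith [hd4]
  have hm2 : 2 * m ≤ k := by
    have : m ≤ 2 ^ (L - 1) := by omega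
    nlinarith [h2Lhalf, h2L]
  -- real bounds
  have hBreal : (B : ℝ) ≤ (2 : ℝ) ^ ((k : ℝ) / 2) := by
    calc (B : ℝ) ≤ ((2 ^ m : ℕ) : ℝ) := by exact_mod_cast hBle
      _ = (2 : ℝ) ^ (m : ℝ) := by push_cast [Real.rpow_natCast]; ring
      _ ≤ (2 : ℝ) ^ ((k : ℝ) / 2) := by
          apply Real.rpow_le_rpow_of_exponent_le one_le_two
          have : (2 * m : ℝ) ≤ (k : ℝ) := by exact_mod_cast hm2
          linarith
  have hCcardR : (2 : ℝ) ^ ((k : ℝ) / 2) ≤ (C.card : ℝ) := by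
    have hpow : ((2 ^ k : ℕ) : ℝ) = (2 : ℝ) ^ ((k : ℝ) / 2) * (2 : ℝ) ^ ((k : ℝ) / 2) := by
      rw [← Real.rpow_add (by norm_num)]
      push_cast [← Real.rpow_natCast 2 k]
      congr 1; ring
    have h1 : ((2 ^ k : ℕ) : ℝ) ≤ (B : ℝ) * (C.card : ℝ) := by
      rw [← hScard]; exact_mod_cast hCcard
    have h2 : (B : ℝ) * (C.card : ℝ) ≤ (2 : ℝ) ^ ((k : ℝ) / 2) * (C.card : ℝ) :=
      mul_le_mul_of_nonneg_right hBreal (by positivity)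
    have hposhalf : (0 : ℝ) < (2 : ℝ) ^ ((k : ℝ) / 2) := Real.rpow_pos_of_pos (by norm_num) _
    have := hpow ▸ (h1.trans h2)
    exact le_of_mul_le_mul_left (by linarith [this]) hposhalf
  refine ⟨C, fun x hx => (hmemS x).1 (hCsub hx), hCcardR, ?_⟩
  intro x hx y hy hxy z ⟨h1, h2, h3⟩
  exact hCind x hx y hy hxy ⟨z, h1, h2, h3⟩
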